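/- arXiv:1201.0559 — 5 statements merged into one kernel-verified Lean document; each statement's English description precedes it below -/
import Mathlib

section
/- Let M be an ergodic reversible finite Markov chain with stationary distribution π, ε-mixing time T(ε) for some 0 < ε ≤ 1/2, and spectral expansion λ(M). Then λ(M) ≤ (2ε)^{1/T(ε)}. -/
open Finset Matrix

/-- Row-stochastic matrix. -/
def IsStochastic {n : ℕ} (M : Matrix (Fin n) (Fin n) ℝ) : Prop :=
  (∀ i j, 0 ≤ M i j) ∧ ∀ i, ∑ j, M i j = 1

/-- Probability distribution on `Fin n`. -/
def IsDist {n : ℕ} (x : Fin n → ℝ) : Prop :=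
  (∀ i, 0 ≤ x i) ∧ ∑ i, x i = 1

/-- Total variation distance. -/
noncomputable def tvDist {n : ℕ} (u w : Fin n → ℝ) : ℝ :=
  (1 / 2) * ∑ i, |u i - w i|

/-- Inner product under the π-kernel. -/
noncomputable def piInner {n : ℕ} (π u v : Fin n → ℝ) : ℝ :=
  ∑ i, u i * v i / π i

/-- π-norm. -/
noncomputable def piNorm {n : ℕ} (π u : Fin n → ℝ) : ℝ :=
  Real.sqrt (∑ i, (u i) ^ 2 / π i)

/-- Spectral expansion of a Markov chain with stationary distribution π. -/
noncomputable def specExp {n : ℕ} (π : Fin n → ℝ) (M : Matrix (Fin n) (Fin n) ℝ) : ℝ :=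
  sSup {r : ℝ | ∃ x : Fin n → ℝ, x ≠ 0 ∧ piInner π x π = 0 ∧
    r = piNorm π (x ᵥ* M) / piNorm π x}

section aux
variable {n : ℕ} {π : Fin n → ℝ} {M : Matrix (Fin n) (Fin n) ℝ}

lemma vecMul_apply' (y : Fin n → ℝ) (M : Matrix (Fin n) (Fin n) ℝ) (j : Fin n) :
    (y ᵥ* M) j = ∑ i, y i * M i j := by
  simp [Matrix.vecMul, dotProduct]

lemma piNorm_nonneg (π u : Fin n → ℝ) : 0 ≤ piNorm π u := Real.sqrt_nonneg _

lemma sum_sq_div_nonneg (hπ : ∀ i, 0 < π i) (u : Fin n → ℝ) :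
    0 ≤ ∑ i, (u i) ^ 2 / π i :=
  Finset.sum_nonneg fun i _ => div_nonneg (sq_nonneg _) (hπ i).le

lemma piNorm_pos (hπ : ∀ i, 0 < π i) {u : Fin n → ℝ} (hu : u ≠ 0) :
    0 < piNorm π u := by
  rcases Function.ne_iff.1 hu with ⟨i, hi⟩
  have hi' : u i ≠ 0 := by simpa using hi
  apply Real.sqrt_pos.2
  apply Finset.sum_pos' (fun j _ => div_nonneg (sq_nonneg _) (hπ j).le)
  exact ⟨i, Finset.mem_univ i, div_pos (by positivity) (hπ i)⟩

lemma piInner_self (hπ : ∀ i, 0 < π i) (u : Fin n → ℝ) :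
    piInner π u u = piNorm π u ^ 2 := by
  rw [piNorm, Real.sq_sqrt (sum_sq_div_nonneg hπ u), piInner]
  exact Finset.sum_congr rfl fun i _ => by rw [sq]

lemma piInner_le (hπ : ∀ i, 0 < π i) (u v : Fin n → ℝ) :
    piInner π u v ≤ piNorm π u * piNorm π v := by
  have h := Finset.sum_mul_sq_le_sq_mul_sq Finset.univ
    (fun i => u i / Real.sqrt (π i)) (fun i => v i / Real.sqrt (π i))
  have h1 : ∀ i : Fin n, (u i / Real.sqrt (π i)) * (v i / Real.sqrt (π i)) = u i * v i / π i := by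
    intro i; rw [div_mul_div_comm, Real.mul_self_sqrt (hπ i).le]
  have h2 : ∀ (w : Fin n → ℝ) (i : Fin n), (w i / Real.sqrt (π i)) ^ 2 = w i ^ 2 / π i := by
    intro w i; rw [div_pow, Real.sq_sqrt (hπ i).le]
  rw [Finset.sum_congr rfl fun i _ => h1 i,
      Finset.sum_congr rfl fun i _ => h2 u i,
      Finset.sum_congr rfl fun i _ => h2 v i] at h
  calc piInner π u v ≤ |piInner π u v| := le_abs_self _
    _ = Real.sqrt ((piInner π u v) ^ 2) := (Real.sqrt_sq_eq_abs _).symm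
    _ ≤ Real.sqrt ((∑ i, u i ^ 2 / π i) * ∑ i, v i ^ 2 / π i) := Real.sqrt_le_sqrt h
    _ = piNorm π u * piNorm π v := Real.sqrt_mul (sum_sq_div_nonneg hπ u) _

lemma piInner_selfadj (hπ : ∀ i, 0 < π i)
    (hrev : ∀ i j, π i * M i j = π j * M j i) (u v : Fin n → ℝ) :
    piInner π (u ᵥ* M) v = piInner π u (v ᵥ* M) := by
  have key : ∀ i j, M i j / π j = M j i / π i := by
    intro i j
    rw [div_eq_div_iff (hπ j).ne' (hπ i).ne']
    linear_combination hrev i j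
  unfold piInner
  simp only [vecMul_apply', Finset.sum_mul, Finset.sum_div, Finset.mul_sum]
  rw [Finset.sum_comm]
  refine Finset.sum_congr rfl fun i _ => Finset.sum_congr rfl fun j _ => ?_
  calc u i * M i j * v j / π j = u i * v j * (M i j / π j) := by ring
    _ = u i * v j * (M j i / π i) := by rw [key i j]
    _ = u i * (v j * M j i) / π i := by ring

/-- Stochastic matrices preserve coordinate sums of row vectors. -/
lemma sum_vecMul' (hM : IsStochastic M) (y : Fin n → ℝ) :
    ∑ j, (y ᵥ* M) j = ∑ i, y i := by
  simp only [vecMul_apply']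
  rw [Finset.sum_comm]
  exact Finset.sum_congr rfl fun i _ => by rw [← Finset.mul_sum, hM.2 i, mul_one]

lemma sum_vecMul_pow (hM : IsStochastic M) (y : Fin n → ℝ) (t : ℕ) :
    ∑ j, (y ᵥ* M ^ t) j = ∑ i, y i := by
  induction t with
  | zero => simp [Matrix.vecMul_one]
  | succ t ih => rw [pow_succ, ← Matrix.vecMul_vecMul, sum_vecMul' hM, ih]

/-- π-norm contraction under a stochastic matrix with stationary π. -/
lemma piNorm_contract (hM : IsStochastic M) (hπ : ∀ i, 0 < π i)
    (hstat : π ᵥ* M = π) (y : Fin n → ℝ) :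
    piNorm π (y ᵥ* M) ≤ piNorm π y := by
  unfold piNorm
  apply Real.sqrt_le_sqrt
  have key : ∀ j, ((y ᵥ* M) j) ^ 2 / π j ≤ ∑ i, y i ^ 2 / π i * M i j := by
    intro j
    have hπM : ∀ i, 0 ≤ π i * M i j := fun i => mul_nonneg (hπ i).le (hM.1 i j)
    have cs := Finset.sum_mul_sq_le_sq_mul_sq Finset.univ
      (fun i => (y i / π i) * Real.sqrt (π i * M i j)) (fun i => Real.sqrt (π i * M i j))
    have e1 : ∀ i : Fin n, ((y i / π i) * Real.sqrt (π i * M i j)) * Real.sqrt (π i * M i j)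
        = y i * M i j := by
      intro i
      have hne : π i ≠ 0 := (hπ i).ne'
      rw [mul_assoc, Real.mul_self_sqrt (hπM i)]
      field_simp
    have e2 : ∀ i : Fin n, ((y i / π i) * Real.sqrt (π i * M i j)) ^ 2
        = y i ^ 2 / π i * M i j := by
      intro i
      have hne : π i ≠ 0 := (hπ i).ne'
      rw [mul_pow, Real.sq_sqrt (hπM i), div_pow]
      field_simp
    have e3 : ∀ i : Fin n, (Real.sqrt (π i * M i j)) ^ 2 = π i * M i j := fun i =>
      Real.sq_sqrt (hπM i)
    rw [Finset.sum_congr rfl fun i _ => e1 i, Finset.sum_congr rfl fun i _ => e2 i,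
        Finset.sum_congr rfl fun i _ => e3 i] at cs
    have hπj : (∑ i, π i * M i j) = π j := by
      conv_rhs => rw [← hstat]
      rw [vecMul_apply' π M j]
    rw [hπj] at cs
    rw [vecMul_apply', div_le_iff₀ (hπ j)]
    exact cs
  calc ∑ j, ((y ᵥ* M) j) ^ 2 / π j ≤ ∑ j, ∑ i, y i ^ 2 / π i * M i j :=
        Finset.sum_le_sum fun j _ => key j
    _ = ∑ i, y i ^ 2 / π i := by
        rw [Finset.sum_comm]
        exact Finset.sum_congr rfl fun i _ => by rw [← Finset.mul_sum, hM.2 i, mul_one]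

/-- ℓ¹ norm is at most the π-norm when ∑ π = 1. -/
lemma l1_le_piNorm (hπ : ∀ i, 0 < π i) (hπ1 : ∑ i, π i = 1) (y : Fin n → ℝ) :
    ∑ i, |y i| ≤ piNorm π y := by
  have cs := Finset.sum_mul_sq_le_sq_mul_sq Finset.univ
    (fun i => |y i| / Real.sqrt (π i)) (fun i => Real.sqrt (π i))
  have e1 : ∀ i : Fin n, (|y i| / Real.sqrt (π i)) * Real.sqrt (π i) = |y i| := by
    intro i
    rw [div_mul_cancel₀]
    exact (Real.sqrt_pos.2 (hπ i)).ne'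
  have e2 : ∀ i : Fin n, (|y i| / Real.sqrt (π i)) ^ 2 = y i ^ 2 / π i := by
    intro i; rw [div_pow, Real.sq_sqrt (hπ i).le, sq_abs]
  have e3 : ∀ i : Fin n, (Real.sqrt (π i)) ^ 2 = π i := fun i => Real.sq_sqrt (hπ i).le
  rw [Finset.sum_congr rfl fun i _ => e1 i, Finset.sum_congr rfl fun i _ => e2 i,
      Finset.sum_congr rfl fun i _ => e3 i, hπ1, mul_one] at cs
  calc ∑ i, |y i| = Real.sqrt ((∑ i, |y i|) ^ 2) :=
        (Real.sqrt_sq (Finset.sum_nonneg fun i _ => abs_nonneg _)).symm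
    _ ≤ Real.sqrt (∑ i, y i ^ 2 / π i) := Real.sqrt_le_sqrt cs
    _ = piNorm π y := rfl

/-- π-norm is at most a constant times the ℓ¹ norm. -/
lemma piNorm_le_l1 (hπ : ∀ i, 0 < π i) (y : Fin n → ℝ) :
    piNorm π y ≤ (∑ i, 1 / Real.sqrt (π i)) * ∑ i, |y i| := by
  set B := ∑ i, 1 / Real.sqrt (π i) with hB
  have hBi : ∀ i : Fin n, 1 / Real.sqrt (π i) ≤ B := fun i =>
    Finset.single_le_sum (f := fun j => 1 / Real.sqrt (π j)) (fun j _ => by positivity)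
      (Finset.mem_univ i)
  have h1 : ∀ i : Fin n, y i ^ 2 / π i ≤ (B * |y i|) ^ 2 := by
    intro i
    have h2 : y i ^ 2 / π i = (|y i| * (1 / Real.sqrt (π i))) ^ 2 := by
      rw [mul_pow, sq_abs, div_pow, one_pow, Real.sq_sqrt (hπ i).le]
      ring
    rw [h2]
    have := mul_le_mul_of_nonneg_left (hBi i) (abs_nonneg (y i))
    calc (|y i| * (1 / Real.sqrt (π i))) ^ 2 ≤ (|y i| * B) ^ 2 := by
          apply pow_le_pow_left₀ (by positivity) this
      _ = (B * |y i|) ^ 2 := by ring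
  have h3 : ∑ i, (B * |y i|) ^ 2 ≤ (∑ i, B * |y i|) ^ 2 :=
    Finset.sum_sq_le_sq_sum_of_nonneg fun i _ => by positivity
  calc piNorm π y = Real.sqrt (∑ i, y i ^ 2 / π i) := rfl
    _ ≤ Real.sqrt ((∑ i, B * |y i|) ^ 2) :=
        Real.sqrt_le_sqrt ((Finset.sum_le_sum fun i _ => h1 i).trans h3)
    _ = ∑ i, B * |y i| := Real.sqrt_sq (Finset.sum_nonneg fun i _ => by positivity)
    _ = B * ∑ i, |y i| := by rw [Finset.mul_sum]

/-- One mixing step contracts the ℓ¹ norm of sum-zero vectors by 2ε. -/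
lemma l1_mix_step (N : Matrix (Fin n) (Fin n) ℝ) (π : Fin n → ℝ) (ε : ℝ)
    (hmix : ∀ x : Fin n → ℝ, IsDist x → ∑ j, |(x ᵥ* N) j - π j| ≤ 2 * ε)
    (y : Fin n → ℝ) (hy : ∑ i, y i = 0) :
    ∑ j, |(y ᵥ* N) j| ≤ 2 * ε * ∑ i, |y i| := by
  set s := ∑ i, max (y i) 0 with hsdef
  have hsnn : 0 ≤ s := Finset.sum_nonneg fun i _ => le_max_right _ _
  have hs2 : ∑ i, max (-(y i)) 0 = s := by
    have : ∑ i, (max (y i) 0 - max (-(y i)) 0) = 0 := by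
      simpa [max_zero_sub_eq_self] using hy
    rw [Finset.sum_sub_distrib] at this
    linarith
  have habs : ∑ i, |y i| = 2 * s := by
    have : ∑ i, |y i| = ∑ i, (max (y i) 0 + max (-(y i)) 0) :=
      Finset.sum_congr rfl fun i _ => (max_zero_add_max_neg_zero_eq_abs_self (y i)).symm
    rw [this, Finset.sum_add_distrib, hs2]
    ring
  by_cases hs : s = 0
  · have hyz : y = 0 := by
      funext i
      have h1 : max (y i) 0 = 0 :=
        (Finset.sum_eq_zero_iff_of_nonneg (fun j _ => le_max_right (y j) 0)).1
          (hsdef.symm.trans hs) i (Finset.mem_univ i)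
      have h2 : max (-(y i)) 0 = 0 :=
        (Finset.sum_eq_zero_iff_of_nonneg (fun j _ => le_max_right (-(y j)) 0)).1
          (hs2.trans hs) i (Finset.mem_univ i)
      have := max_zero_sub_eq_self (y i)
      simp only [Pi.zero_apply]
      linarith
    rw [hyz]
    simp [Matrix.zero_vecMul]
  · have hspos : 0 < s := lt_of_le_of_ne hsnn (Ne.symm hs)
    set p := fun i => max (y i) 0 / s with hpdef
    set q := fun i => max (-(y i)) 0 / s with hqdef
    have hp : IsDist p := ⟨fun i => by positivity,
      by rw [hpdef]; rw [← Finset.sum_div, ← hsdef, div_self hs]⟩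
    have hq : IsDist q := ⟨fun i => by positivity,
      by rw [hqdef]; rw [← Finset.sum_div, hs2, div_self hs]⟩
    have hyi : ∀ i, y i = s * p i - s * q i := by
      intro i
      rw [hpdef, hqdef]
      simp only []
      rw [mul_div_cancel₀ _ hs, mul_div_cancel₀ _ hs, max_zero_sub_eq_self]
    have hdec : ∀ j, (y ᵥ* N) j = s * ((p ᵥ* N) j - π j) - s * ((q ᵥ* N) j - π j) := by
      intro j
      simp only [vecMul_apply']
      rw [Finset.sum_congr rfl fun i _ => by rw [hyi i]]
      rw [show (∑ i, ((s * p i - s * q i) * N i j)) =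
        s * (∑ i, p i * N i j) - s * (∑ i, q i * N i j) from by
          rw [Finset.mul_sum, Finset.mul_sum, ← Finset.sum_sub_distrib]
          exact Finset.sum_congr rfl fun i _ => by ring]
      ring
    calc ∑ j, |(y ᵥ* N) j|
        ≤ ∑ j, (s * |(p ᵥ* N) j - π j| + s * |(q ᵥ* N) j - π j|) := by
          apply Finset.sum_le_sum
          intro j _
          rw [hdec j]
          calc |s * ((p ᵥ* N) j - π j) - s * ((q ᵥ* N) j - π j)|
              ≤ |s * ((p ᵥ* N) j - π j)| + |s * ((q ᵥ* N) j - π j)| := abs_sub _ _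
            _ = s * |(p ᵥ* N) j - π j| + s * |(q ᵥ* N) j - π j| := by
                rw [abs_mul, abs_mul, abs_of_pos hspos]
      _ = s * (∑ j, |(p ᵥ* N) j - π j|) + s * (∑ j, |(q ᵥ* N) j - π j|) := by
          rw [Finset.sum_add_distrib, Finset.mul_sum, Finset.mul_sum]
      _ ≤ s * (2 * ε) + s * (2 * ε) :=
          add_le_add (mul_le_mul_of_nonneg_left (hmix p hp) hspos.le)
            (mul_le_mul_of_nonneg_left (hmix q hq) hspos.le)
      _ = 2 * ε * ∑ i, |y i| := by rw [habs]; ring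

end aux

theorem stmt_2 (n : ℕ) (M : Matrix (Fin n) (Fin n) ℝ) (π : Fin n → ℝ)
    (hM : IsStochastic M) (hπ : IsDist π) (hπpos : ∀ i, 0 < π i)
    (hstat : π ᵥ* M = π)
    (hrev : ∀ i j, π i * M i j = π j * M j i)
    (ε : ℝ) (hε0 : 0 < ε) (hε : ε ≤ 1 / 2)
    (T : ℕ)
    (hT : IsLeast {t : ℕ | ∀ x : Fin n → ℝ, IsDist x → tvDist (x ᵥ* (M ^ t)) π ≤ ε} T) :
    specExp π M ≤ (2 * ε) ^ ((1 : ℝ) / T) := by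
  obtain ⟨hT1, _⟩ := hT
  have hε2 : (0:ℝ) < 2 * ε := by linarith
  have hBpos : (0:ℝ) < (2 * ε) ^ ((1:ℝ)/T) := Real.rpow_pos_of_pos hε2 _
  apply Real.sSup_le _ hBpos.le
  rintro r ⟨x, hx0, hxi, rfl⟩
  have hsumx : ∑ i, x i = 0 := by
    have e : piInner π x π = ∑ i, x i := by
      unfold piInner
      exact Finset.sum_congr rfl fun i _ => by
        rw [mul_div_assoc, div_self (hπpos i).ne', mul_one]
    rw [e] at hxi
    exact hxi
  have r0pos : 0 < piNorm π x := piNorm_pos hπpos hx0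
  rcases Nat.eq_zero_or_pos T with hT0 | hT0
  · subst hT0
    simp only [Nat.cast_zero, div_zero, Real.rpow_zero]
    rw [div_le_one r0pos]
    exact piNorm_contract hM hπpos hstat x
  · set a := piNorm π (x ᵥ* M) / piNorm π x with ha
    have ha0 : 0 ≤ a := div_nonneg (piNorm_nonneg _ _) r0pos.le
    have hkey : a ^ T ≤ 2 * ε := by
      by_cases hr1 : piNorm π (x ᵥ* M) = 0
      · rw [ha, hr1, zero_div, zero_pow hT0.ne']
        linarith
      · have r1pos : 0 < piNorm π (x ᵥ* M) :=
          lt_of_le_of_ne (piNorm_nonneg _ _) (Ne.symm hr1)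
        set r : ℕ → ℝ := fun t => piNorm π (x ᵥ* M ^ t) with hrdef
        have hrnn : ∀ t, 0 ≤ r t := fun t => piNorm_nonneg _ _
        have hr0 : r 0 = piNorm π x := by
          show piNorm π (x ᵥ* M ^ 0) = piNorm π x
          rw [pow_zero, Matrix.vecMul_one]
        have hr1' : r 1 = piNorm π (x ᵥ* M) := by
          show piNorm π (x ᵥ* M ^ 1) = piNorm π (x ᵥ* M)
          rw [pow_one]
        have hstep : ∀ t, x ᵥ* M ^ (t+1) = (x ᵥ* M ^ t) ᵥ* M := by
          intro t; rw [pow_succ, ← Matrix.vecMul_vecMul]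
        have lc : ∀ t, r (t+1) ^ 2 ≤ r t * r (t+2) := by
          intro t
          have e : piInner π (x ᵥ* M ^ (t+1)) (x ᵥ* M ^ (t+1))
              = piInner π (x ᵥ* M ^ t) (x ᵥ* M ^ (t+2)) := by
            conv_lhs => rw [hstep t]
            rw [piInner_selfadj hπpos hrev, ← hstep t, ← hstep (t+1)]
          calc r (t+1) ^ 2 = piInner π (x ᵥ* M ^ (t+1)) (x ᵥ* M ^ (t+1)) :=
                (piInner_self hπpos _).symm
            _ = piInner π (x ᵥ* M ^ t) (x ᵥ* M ^ (t+2)) := e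
            _ ≤ r t * r (t+2) := piInner_le hπpos _ _
        have rpos1 : ∀ t, 0 < r (t+1) := by
          intro t
          induction t with
          | zero => rw [hr1']; exact r1pos
          | succ t ih =>
            by_contra h
            push_neg at h
            have h1 := lc t
            have h2 : r t * r (t+2) ≤ 0 :=
              mul_nonpos_of_nonneg_of_nonpos (hrnn t) h
            nlinarith
        have rpos : ∀ t, 0 < r t := fun t => by
          cases t with
          | zero => rw [hr0]; exact r0pos
          | succ t => exact rpos1 t
        have qmono : ∀ t, r 1 * r t ≤ r 0 * r (t+1) := by
          intro t
          induction t with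
          | zero => exact le_of_eq (mul_comm _ _)
          | succ t ih =>
            have h1 : r 1 * r t * r (t+1) ≤ r 0 * r (t+1) * r (t+1) :=
              mul_le_mul_of_nonneg_right ih (hrnn (t+1))
            have h2 : r 0 * (r (t+1) * r (t+1)) ≤ r 0 * (r t * r (t+2)) := by
              apply mul_le_mul_of_nonneg_left _ (hrnn 0)
              have := lc t
              nlinarith
            have h4 : (r 1 * r (t+1)) * r t ≤ (r 0 * r (t+2)) * r t := by
              calc (r 1 * r (t+1)) * r t = r 1 * r t * r (t+1) := by ring
                _ ≤ r 0 * r (t+1) * r (t+1) := h1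
                _ = r 0 * (r (t+1) * r (t+1)) := by ring
                _ ≤ r 0 * (r t * r (t+2)) := h2
                _ = (r 0 * r (t+2)) * r t := by ring
            exact le_of_mul_le_mul_right h4 (rpos t)
        have claim : ∀ t, r 1 ^ t * r 0 ≤ r t * r 0 ^ t := by
          intro t
          induction t with
          | zero => simp
          | succ t ih =>
            calc r 1 ^ (t+1) * r 0 = r 1 * (r 1 ^ t * r 0) := by ring
              _ ≤ r 1 * (r t * r 0 ^ t) := mul_le_mul_of_nonneg_left ih (hrnn 1)
              _ = (r 1 * r t) * r 0 ^ t := by ring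
              _ ≤ (r 0 * r (t+1)) * r 0 ^ t :=
                  mul_le_mul_of_nonneg_right (qmono t) (pow_nonneg (hrnn 0) t)
              _ = r (t+1) * r 0 ^ (t+1) := by ring
        have hmix : ∀ z : Fin n → ℝ, IsDist z → ∑ j, |(z ᵥ* M ^ T) j - π j| ≤ 2 * ε := by
          intro z hz
          have h := hT1 z hz
          rw [tvDist] at h
          linarith
        have iter : ∀ k, ∑ j, |(x ᵥ* M ^ (T * k)) j| ≤ (2 * ε) ^ k * ∑ i, |x i| := by
          intro k
          induction k with
          | zero => simp [Matrix.vecMul_one]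
          | succ k ih =>
            have hsz : ∑ j, (x ᵥ* M ^ (T * k)) j = 0 := by
              rw [sum_vecMul_pow hM, hsumx]
            have hTk : T * (k+1) = T * k + T := by ring
            rw [hTk, pow_add, ← Matrix.vecMul_vecMul]
            calc ∑ j, |((x ᵥ* M ^ (T*k)) ᵥ* M ^ T) j|
                ≤ 2 * ε * ∑ j, |(x ᵥ* M ^ (T*k)) j| :=
                  l1_mix_step (M ^ T) π ε hmix _ hsz
              _ ≤ 2 * ε * ((2 * ε) ^ k * ∑ i, |x i|) :=
                  mul_le_mul_of_nonneg_left ih hε2.le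
              _ = (2 * ε) ^ (k+1) * ∑ i, |x i| := by ring
        set B := ∑ i, 1 / Real.sqrt (π i) with hBdef
        have hBnn : 0 ≤ B := Finset.sum_nonneg fun i _ => by positivity
        have ha' : a = r 1 / r 0 := by rw [ha, hr0, hr1']
        have hbound : ∀ k, (a ^ T) ^ k ≤ (2 * ε) ^ k * (B * (∑ i, |x i|) / r 0) := by
          intro k
          have h1 : a ^ (T * k) ≤ r (T * k) / r 0 := by
            rw [ha', div_pow, div_le_div_iff₀ (pow_pos (rpos 0) _) (rpos 0)]
            exact claim (T * k)
          have h2 : r (T * k) ≤ B * ((2 * ε) ^ k * ∑ i, |x i|) := by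
            calc r (T * k) ≤ B * ∑ j, |(x ᵥ* M ^ (T * k)) j| := piNorm_le_l1 hπpos _
              _ ≤ B * ((2 * ε) ^ k * ∑ i, |x i|) :=
                  mul_le_mul_of_nonneg_left (iter k) hBnn
          calc (a ^ T) ^ k = a ^ (T * k) := by rw [← pow_mul]
            _ ≤ r (T * k) / r 0 := h1
            _ ≤ (B * ((2 * ε) ^ k * ∑ i, |x i|)) / r 0 :=
                (div_le_div_iff_of_pos_right (rpos 0)).2 h2
            _ = (2 * ε) ^ k * (B * (∑ i, |x i|) / r 0) := by ring
        by_contra hcon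
        push_neg at hcon
        have hgt1 : 1 < a ^ T / (2 * ε) := (one_lt_div hε2).2 hcon
        obtain ⟨k, hk⟩ :=
          ((tendsto_pow_atTop_atTop_of_one_lt hgt1).eventually_gt_atTop
            (B * (∑ i, |x i|) / r 0)).exists
        have hb := hbound k
        rw [div_pow] at hk
        have h2 : (a ^ T) ^ k / (2 * ε) ^ k ≤ B * (∑ i, |x i|) / r 0 := by
          rw [div_le_iff₀ (by positivity)]
          linarith [hb]
        linarith
    have haT : a = (a ^ T) ^ ((1:ℝ)/T) := by
      rw [← Real.rpow_natCast a T, ← Real.rpow_mul ha0,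
        mul_one_div, div_self (Nat.cast_ne_zero.2 hT0.ne' : (T:ℝ) ≠ 0), Real.rpow_one]
    rw [haT]
    exact Real.rpow_le_rpow (pow_nonneg ha0 _) hkey (by positivity)
end

section
/- Let M be an ergodic (possibly irreversible) finite Markov chain with stationary distribution π and ε-mixing time T(ε) for 0 < ε ≤ 1/2. Then the spectral expansion of M^{T(ε)} satisfies λ(M^{T(ε)}) ≤ √(2ε). -/
open Finset Matrix

/-- Component of `x` parallel to `π` (in the π-inner product). -/
noncomputable def parComp {n : ℕ} (π x : Fin n → ℝ) : Fin n → ℝ :=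
  fun i => piInner π x π * π i

/-- Component of `x` perpendicular to `π` (in the π-inner product). -/
noncomputable def perpComp {n : ℕ} (π x : Fin n → ℝ) : Fin n → ℝ :=
  fun i => x i - parComp π x i

open Finset Matrix

lemma core_bound {n : ℕ} (N : Matrix (Fin n) (Fin n) ℝ) (π : Fin n → ℝ)
    (hπpos : ∀ i, 0 < π i)
    (hN0 : ∀ i j, 0 ≤ N i j) (hN1 : ∀ i, ∑ j, N i j = 1)
    (hπN : ∀ k, ∑ j, π j * N j k = π k)
    (ε : ℝ) (hmix : ∀ i, ∑ k, |N i k - π k| ≤ 2 * ε)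
    (x : Fin n → ℝ) (hx : ∑ i, x i = 0) :
    ∑ k, (∑ i, x i * N i k) ^ 2 / π k ≤ 2 * ε * ∑ i, x i ^ 2 / π i := by
  have hπne : ∀ i, π i ≠ 0 := fun i => (hπpos i).ne'
  set f : Fin n → ℝ := fun i => x i / π i with hf
  set Q : Fin n → Fin n → ℝ := fun i j => π i * π j * ∑ k, N i k * N j k / π k with hQ
  have hQsymm : ∀ i j, Q i j = Q j i := by
    intro i j
    simp only [hQ]
    rw [show (∑ k, N i k * N j k / π k) = ∑ k, N j k * N i k / π k from
      Finset.sum_congr rfl fun k _ => by ring]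
    ring
  -- row deviation bound
  have hQrow : ∀ i, ∑ j, |Q i j - π i * π j| ≤ 2 * ε * π i := by
    intro i
    have hrepr : ∀ j, Q i j - π i * π j
        = ∑ k, (N i k - π k) * (π i * π j * N j k / π k) := by
      intro j
      have h2 : ∀ k : Fin n, (N i k - π k) * (π i * π j * N j k / π k)
          = π i * π j * (N i k * N j k / π k) - π i * π j * N j k := by
        intro k; field_simp [hπne k]
      rw [Finset.sum_congr rfl fun k _ => h2 k, Finset.sum_sub_distrib,
        ← Finset.mul_sum, ← Finset.mul_sum, hN1 j, mul_one]
    have habs : ∀ j, |Q i j - π i * π j|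
        ≤ ∑ k, |N i k - π k| * (π i * π j * N j k / π k) := by
      intro j
      rw [hrepr j]
      refine (Finset.abs_sum_le_sum_abs _ _).trans_eq ?_
      refine Finset.sum_congr rfl fun k _ => ?_
      rw [abs_mul, abs_of_nonneg (div_nonneg (mul_nonneg
        (mul_nonneg (hπpos i).le (hπpos j).le) (hN0 j k)) (hπpos k).le)]
    calc ∑ j, |Q i j - π i * π j|
        ≤ ∑ j, ∑ k, |N i k - π k| * (π i * π j * N j k / π k) :=
          Finset.sum_le_sum fun j _ => habs j
      _ = ∑ k, |N i k - π k| * π i := by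
          rw [Finset.sum_comm]
          refine Finset.sum_congr rfl fun k _ => ?_
          have h3 : ∑ j, |N i k - π k| * (π i * π j * N j k / π k)
              = |N i k - π k| * π i / π k * ∑ j, π j * N j k := by
            rw [Finset.mul_sum]
            exact Finset.sum_congr rfl fun j _ => by ring
          rw [h3, hπN k, div_mul_cancel₀ _ (hπne k)]
      _ = π i * ∑ k, |N i k - π k| := by rw [← Finset.sum_mul]; ring
      _ ≤ π i * (2 * ε) := mul_le_mul_of_nonneg_left (hmix i) (hπpos i).le
      _ = 2 * ε * π i := by ring
  -- expansion identity
  have hA : ∑ k, (∑ i, x i * N i k) ^ 2 / π k = ∑ i, ∑ j, f i * f j * Q i j := by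
    have h1 : ∀ k : Fin n, (∑ i, x i * N i k) ^ 2 / π k
        = ∑ i, ∑ j, x i * x j * (N i k * N j k / π k) := by
      intro k
      rw [sq, Finset.sum_mul_sum, Finset.sum_div]
      refine Finset.sum_congr rfl fun i _ => ?_
      rw [Finset.sum_div]
      exact Finset.sum_congr rfl fun j _ => by ring
    rw [Finset.sum_congr rfl fun k _ => h1 k, Finset.sum_comm]
    refine Finset.sum_congr rfl fun i _ => ?_
    rw [Finset.sum_comm]
    refine Finset.sum_congr rfl fun j _ => ?_
    simp only [hf, hQ]
    rw [show x i / π i * (x j / π j) * (π i * π j * ∑ k, N i k * N j k / π k)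
        = x i * x j * ∑ k, N i k * N j k / π k from by
          field_simp [hπne i, hπne j],
      Finset.mul_sum]
  rw [hA]
  have hpf : ∀ i, π i * f i = x i := by
    intro i; simp only [hf]; field_simp [hπne i]
  have hsumpf : ∑ j, π j * f j = 0 := by
    rw [Finset.sum_congr rfl fun j _ => hpf j]; exact hx
  -- split off stationary part
  have hsplit : ∑ i, ∑ j, f i * f j * Q i j
      = ∑ i, ∑ j, f i * f j * (Q i j - π i * π j) := by
    have h1 : ∀ i j : Fin n, f i * f j * Q i j
        = f i * f j * (Q i j - π i * π j) + (π i * f i) * (π j * f j) := by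
      intro i j; ring
    rw [Finset.sum_congr rfl fun i _ =>
      (Finset.sum_congr rfl fun j _ => h1 i j).trans Finset.sum_add_distrib,
      Finset.sum_add_distrib]
    have h3 : ∑ i, ∑ j, (π i * f i) * (π j * f j) = 0 :=
      Finset.sum_eq_zero fun i _ => by rw [← Finset.mul_sum, hsumpf, mul_zero]
    rw [h3, add_zero]
  rw [hsplit]
  -- termwise AM-GM bound
  have hterm : ∀ i j : Fin n, f i * f j * (Q i j - π i * π j)
      ≤ f i ^ 2 / 2 * |Q i j - π i * π j| + f j ^ 2 / 2 * |Q i j - π i * π j| := by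
    intro i j
    calc f i * f j * (Q i j - π i * π j) ≤ |f i * f j * (Q i j - π i * π j)| :=
          le_abs_self _
      _ = |f i * f j| * |Q i j - π i * π j| := by rw [abs_mul]
      _ ≤ (f i ^ 2 / 2 + f j ^ 2 / 2) * |Q i j - π i * π j| := by
          refine mul_le_mul_of_nonneg_right ?_ (abs_nonneg _)
          nlinarith [sq_nonneg (|f i| - |f j|), abs_mul (f i) (f j),
            sq_abs (f i), sq_abs (f j)]
      _ = f i ^ 2 / 2 * |Q i j - π i * π j| + f j ^ 2 / 2 * |Q i j - π i * π j| := by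
          ring
  have hEsymm : ∀ i j : Fin n, |Q i j - π i * π j| = |Q j i - π j * π i| := by
    intro i j; rw [hQsymm i j, mul_comm (π i)]
  have hB1 : ∑ i, ∑ j, f i ^ 2 / 2 * |Q i j - π i * π j|
      ≤ ε * ∑ i, π i * f i ^ 2 := by
    calc ∑ i, ∑ j, f i ^ 2 / 2 * |Q i j - π i * π j|
        = ∑ i, f i ^ 2 / 2 * ∑ j, |Q i j - π i * π j| := by
          exact Finset.sum_congr rfl fun i _ => (Finset.mul_sum _ _ _).symm
      _ ≤ ∑ i, f i ^ 2 / 2 * (2 * ε * π i) :=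
          Finset.sum_le_sum fun i _ =>
            mul_le_mul_of_nonneg_left (hQrow i) (by positivity)
      _ = ε * ∑ i, π i * f i ^ 2 := by
          rw [Finset.mul_sum]; exact Finset.sum_congr rfl fun i _ => by ring
  have hB2 : ∑ i, ∑ j, f j ^ 2 / 2 * |Q i j - π i * π j|
      ≤ ε * ∑ i, π i * f i ^ 2 := by
    calc ∑ i, ∑ j, f j ^ 2 / 2 * |Q i j - π i * π j|
        = ∑ j, ∑ i, f j ^ 2 / 2 * |Q j i - π j * π i| := by
          rw [Finset.sum_comm]
          exact Finset.sum_congr rfl fun j _ => Finset.sum_congr rfl fun i _ => by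
            rw [hEsymm i j]
      _ = ∑ j, f j ^ 2 / 2 * ∑ i, |Q j i - π j * π i| :=
          Finset.sum_congr rfl fun j _ => (Finset.mul_sum _ _ _).symm
      _ ≤ ∑ j, f j ^ 2 / 2 * (2 * ε * π j) :=
          Finset.sum_le_sum fun j _ =>
            mul_le_mul_of_nonneg_left (hQrow j) (by positivity)
      _ = ε * ∑ i, π i * f i ^ 2 := by
          rw [Finset.mul_sum]; exact Finset.sum_congr rfl fun i _ => by ring
  have hfinal : ∑ i, π i * f i ^ 2 = ∑ i, x i ^ 2 / π i := by
    refine Finset.sum_congr rfl fun i _ => ?_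
    simp only [hf]; field_simp [hπne i]
  calc ∑ i, ∑ j, f i * f j * (Q i j - π i * π j)
      ≤ ∑ i, ∑ j, (f i ^ 2 / 2 * |Q i j - π i * π j|
          + f j ^ 2 / 2 * |Q i j - π i * π j|) :=
        Finset.sum_le_sum fun i _ => Finset.sum_le_sum fun j _ => hterm i j
    _ = (∑ i, ∑ j, f i ^ 2 / 2 * |Q i j - π i * π j|)
        + ∑ i, ∑ j, f j ^ 2 / 2 * |Q i j - π i * π j| := by
        rw [← Finset.sum_add_distrib]
        exact Finset.sum_congr rfl fun i _ => Finset.sum_add_distrib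
    _ ≤ ε * ∑ i, π i * f i ^ 2 + ε * ∑ i, π i * f i ^ 2 := add_le_add hB1 hB2
    _ = 2 * ε * ∑ i, x i ^ 2 / π i := by rw [hfinal]; ring

lemma isStochastic_pow' {n : ℕ} {M : Matrix (Fin n) (Fin n) ℝ}
    (hM : IsStochastic M) (t : ℕ) : IsStochastic (M ^ t) := by
  induction t with
  | zero =>
    refine ⟨fun i j => ?_, fun i => ?_⟩
    · rw [pow_zero, Matrix.one_apply]
      split <;> norm_num
    · simp [Matrix.one_apply]
  | succ t ih =>
    rw [pow_succ]
    refine ⟨fun i j => ?_, fun i => ?_⟩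
    · rw [Matrix.mul_apply]
      exact Finset.sum_nonneg fun k _ => mul_nonneg (ih.1 i k) (hM.1 k j)
    · simp only [Matrix.mul_apply]
      rw [Finset.sum_comm]
      calc ∑ k, ∑ j, (M ^ t) i k * M k j
          = ∑ k, (M ^ t) i k * ∑ j, M k j :=
            Finset.sum_congr rfl fun k _ => (Finset.mul_sum _ _ _).symm
        _ = 1 := by
            rw [Finset.sum_congr rfl fun k _ => by rw [hM.2 k, mul_one]]
            exact ih.2 i

lemma vecMul_pow_eq' {n : ℕ} {M : Matrix (Fin n) (Fin n) ℝ} {π : Fin n → ℝ}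
    (hstat : π ᵥ* M = π) (t : ℕ) : π ᵥ* (M ^ t) = π := by
  induction t with
  | zero => simp
  | succ t ih => rw [pow_succ, ← Matrix.vecMul_vecMul, ih, hstat]

theorem stmt_3 (n : ℕ) (M : Matrix (Fin n) (Fin n) ℝ) (π : Fin n → ℝ)
    (hM : IsStochastic M) (hπ : IsDist π) (hπpos : ∀ i, 0 < π i)
    (hstat : π ᵥ* M = π)
    (ε : ℝ) (hε0 : 0 < ε) (hε : ε ≤ 1 / 2)
    (T : ℕ)
    (hT : IsLeast {t : ℕ | ∀ x : Fin n → ℝ, IsDist x → tvDist (x ᵥ* (M ^ t)) π ≤ ε} T) :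
    specExp π (M ^ T) ≤ Real.sqrt (2 * ε) := by
  have hπne : ∀ i, π i ≠ 0 := fun i => (hπpos i).ne'
  set N := M ^ T with hNdef
  have hNst := isStochastic_pow' hM T
  have hstatN : π ᵥ* N = π := vecMul_pow_eq' hstat T
  have hπNcoord : ∀ k, ∑ j, π j * N j k = π k := by
    intro k
    have h := congrFun hstatN k
    simpa [Matrix.vecMul, dotProduct] using h
  have hmix : ∀ i, ∑ k, |N i k - π k| ≤ 2 * ε := by
    intro i
    have hdist : IsDist (fun j => if j = i then (1:ℝ) else 0) :=
      ⟨fun j => by by_cases h : j = i <;> simp [h], by simp⟩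
    have h1 := hT.1 _ hdist
    rw [← hNdef] at h1
    have h2 : (fun j => if j = i then (1:ℝ) else 0) ᵥ* N = fun k => N i k := by
      funext k
      simp [Matrix.vecMul, dotProduct, ite_mul]
    rw [h2] at h1
    unfold tvDist at h1
    simp only at h1
    linarith
  rw [specExp]
  apply Real.sSup_le _ (Real.sqrt_nonneg _)
  rintro r ⟨x, hx0, hxperp, rfl⟩
  have hsum0 : ∑ i, x i = 0 := by
    have h : piInner π x π = ∑ i, x i := by
      unfold piInner
      exact Finset.sum_congr rfl fun i _ => by
        rw [mul_div_assoc, div_self (hπne i), mul_one]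
    rw [← h, hxperp]
  obtain ⟨i0, hi0⟩ := Function.ne_iff.mp hx0
  have hxpos : 0 < ∑ i, x i ^ 2 / π i :=
    Finset.sum_pos' (fun i _ => div_nonneg (sq_nonneg _) (hπpos i).le)
      ⟨i0, Finset.mem_univ i0, div_pos
        (lt_of_le_of_ne (sq_nonneg _) (Ne.symm (pow_ne_zero 2 hi0))) (hπpos i0)⟩
  have hnormpos : 0 < piNorm π x := Real.sqrt_pos.mpr hxpos
  rw [div_le_iff₀ hnormpos]
  unfold piNorm
  rw [← Real.sqrt_mul (by linarith : (0:ℝ) ≤ 2 * ε)]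
  apply Real.sqrt_le_sqrt
  have hvec : ∀ k, (x ᵥ* N) k = ∑ i, x i * N i k := by
    intro k; simp [Matrix.vecMul, dotProduct]
  calc ∑ k, (x ᵥ* N) k ^ 2 / π k = ∑ k, (∑ i, x i * N i k) ^ 2 / π k :=
        Finset.sum_congr rfl fun k _ => by rw [hvec k]
    _ ≤ 2 * ε * ∑ i, x i ^ 2 / π i :=
        core_bound N π hπpos hNst.1 hNst.2 hπNcoord ε hmix x hsum0
end

section
/- Let π be a probability distribution with π_i > 0, f:[n]→[0,1] with ∑_i f(i)π_i = μ, and P diagonal with P_{jj} = e^{r f(j)}, where 0 ≤ r ≤ 1/2. Then the perpendicular component of πP satisfies ‖(πP)^⊥‖_π ≤ 2r√μ. -/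
open Finset Matrix

lemma exp_le_one_add_two_mul {x : ℝ} (h0 : 0 ≤ x) (h1 : x ≤ 1 / 2) :
    Real.exp x ≤ 1 + 2 * x := by
  have hlt : Real.exp (1/2) ≤ 2 := by
    have h2 : Real.exp (1/2) * Real.exp (1/2) = Real.exp 1 := by
      rw [← Real.exp_add]; norm_num
    nlinarith [Real.exp_one_lt_d9, Real.exp_pos (1/2 : ℝ)]
  have hc := convexOn_exp.2 (Set.mem_univ (0:ℝ)) (Set.mem_univ (1/2 : ℝ))
    (show (0:ℝ) ≤ 1 - 2*x by linarith) (show (0:ℝ) ≤ 2*x by linarith)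
    (show (1 - 2*x) + (2*x) = 1 by ring)
  simp only [smul_eq_mul, mul_zero, zero_add, Real.exp_zero] at hc
  have hx : 2*x*(1/2) = x := by ring
  rw [hx] at hc
  nlinarith

theorem stmt_8 (n : ℕ) (π : Fin n → ℝ) (hπ : IsDist π) (hπpos : ∀ i, 0 < π i)
    (f : Fin n → ℝ) (hf : ∀ i, 0 ≤ f i ∧ f i ≤ 1)
    (μ : ℝ) (hμ : ∑ i, f i * π i = μ)
    (r : ℝ) (hr0 : 0 ≤ r) (hr : r ≤ 1 / 2)
    (P : Matrix (Fin n) (Fin n) ℝ)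
    (hP : P = Matrix.diagonal fun j => Real.exp (r * f j)) :
    piNorm π (perpComp π (π ᵥ* P)) ≤ 2 * r * Real.sqrt μ := by
  set e : Fin n → ℝ := fun i => Real.exp (r * f i) with he
  have hvm : ∀ i, (π ᵥ* P) i = π i * e i := by
    intro i; rw [hP, Matrix.vecMul_diagonal]
  set S : ℝ := ∑ i, π i * e i with hS
  have hinner : piInner π (π ᵥ* P) π = S := by
    rw [piInner, hS]
    apply Finset.sum_congr rfl
    intro i _
    rw [hvm i, mul_div_assoc, div_self (hπpos i).ne', mul_one]
  have hperp : ∀ i, perpComp π (π ᵥ* P) i = π i * (e i - S) := by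
    intro i
    simp only [perpComp, parComp, hinner, hvm i]
    ring
  have hμ0 : 0 ≤ μ := by
    rw [← hμ]
    exact Finset.sum_nonneg fun i _ => mul_nonneg (hf i).1 (hπpos i).le
  -- key bound on the squared norm
  have hkey : ∑ i, (perpComp π (π ᵥ* P) i) ^ 2 / π i ≤ 4 * r ^ 2 * μ := by
    have hterm : ∀ i, (perpComp π (π ᵥ* P) i) ^ 2 / π i = π i * (e i - S) ^ 2 := by
      intro i
      rw [hperp i]
      field_simp [(hπpos i).ne']
    rw [Finset.sum_congr rfl fun i _ => hterm i]
    set T : ℝ := ∑ i, π i * (e i - 1) with hT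
    have hsum1 : ∑ i, π i = 1 := hπ.2
    have hST : S = T + 1 := by
      have : T = S - 1 := by
        rw [hT, hS, show ∑ i, π i * (e i - 1) = (∑ i, π i * e i) - ∑ i, π i from
          by rw [← Finset.sum_sub_distrib]; exact Finset.sum_congr rfl fun i _ => by ring,
          hsum1]
      linarith
    have hexpand : ∑ i, π i * (e i - S) ^ 2
        = (∑ i, π i * (e i - 1) ^ 2) - T ^ 2 := by
      have : ∀ i, π i * (e i - S) ^ 2
          = π i * (e i - 1) ^ 2 - 2 * T * (π i * (e i - 1)) + T ^ 2 * π i := by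
        intro i; rw [hST]; ring
      rw [Finset.sum_congr rfl fun i _ => this i]
      rw [Finset.sum_add_distrib, Finset.sum_sub_distrib, ← Finset.mul_sum,
        ← Finset.mul_sum, ← hT, hsum1]
      ring
    rw [hexpand]
    have hbound : ∑ i, π i * (e i - 1) ^ 2 ≤ 4 * r ^ 2 * μ := by
      rw [← hμ, Finset.mul_sum]
      apply Finset.sum_le_sum
      intro i _
      have hg0 : 0 ≤ e i - 1 := by
        have := Real.one_le_exp (mul_nonneg hr0 (hf i).1)
        simpa [he] using this
      have hg2 : e i - 1 ≤ 2 * (r * f i) := by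
        have h1 : r * f i ≤ 1 / 2 := by
          nlinarith [(hf i).1, (hf i).2]
        have h2' := exp_le_one_add_two_mul (mul_nonneg hr0 (hf i).1) h1
        have h3 : e i = Real.exp (r * f i) := rfl
        linarith
      have hfi := hf i
      have hπi := (hπpos i).le
      have hgg : (e i - 1) ^ 2 ≤ 4 * r ^ 2 * (f i) ^ 2 := by
        nlinarith [mul_nonneg hr0 hfi.1]
      have hff : (f i) ^ 2 ≤ f i := by nlinarith [hfi.1, hfi.2]
      have h1 := mul_le_mul_of_nonneg_left hgg hπi
      have h2 := mul_nonneg (mul_nonneg (sq_nonneg r) hπi) (sub_nonneg.2 hff)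
      nlinarith
    nlinarith [sq_nonneg T]
  rw [piNorm]
  calc Real.sqrt (∑ i, (perpComp π (π ᵥ* P) i) ^ 2 / π i)
      ≤ Real.sqrt (4 * r ^ 2 * μ) := Real.sqrt_le_sqrt hkey
    _ = 2 * r * Real.sqrt μ := by
        rw [show 4 * r ^ 2 * μ = (2 * r) ^ 2 * μ by ring,
          Real.sqrt_mul (sq_nonneg _), Real.sqrt_sq (by linarith)]
end

section
/- Let π be a probability distribution with π_i > 0, f:[n]→[0,1] with ∑_i f(i)π_i = μ, and P diagonal with P_{jj} = e^{−r f(j)} for 0 ≤ r ≤ 1/2. Then ‖(πP)^⊥‖_π ≤ √2 · r √μ. -/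
open Finset Matrix

theorem stmt_12 (n : ℕ) (π : Fin n → ℝ) (hπ : IsDist π) (hπpos : ∀ i, 0 < π i)
    (f : Fin n → ℝ) (hf : ∀ i, 0 ≤ f i ∧ f i ≤ 1)
    (μ : ℝ) (hμ : ∑ i, f i * π i = μ)
    (r : ℝ) (hr0 : 0 ≤ r) (hr : r ≤ 1 / 2)
    (P : Matrix (Fin n) (Fin n) ℝ)
    (hP : P = Matrix.diagonal fun j => Real.exp (-(r * f j))) :
    piNorm π (perpComp π (π ᵥ* P)) ≤ Real.sqrt 2 * r * Real.sqrt μ := by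

  subst hP
  have hμ0 : 0 ≤ μ := by
    rw [← hμ]
    exact Finset.sum_nonneg fun i _ => mul_nonneg (hf i).1 (hπpos i).le
  set X : Fin n → ℝ := fun i => Real.exp (-(r * f i)) with hX
  set S : ℝ := ∑ i, π i * X i with hS
  have hvm : (π ᵥ* Matrix.diagonal X) = fun i => π i * X i := by
    funext i; simp [Matrix.vecMul_diagonal]
  have hinner : piInner π (π ᵥ* Matrix.diagonal X) π = S := by
    rw [hvm, piInner, hS]
    refine Finset.sum_congr rfl fun i _ => ?_
    have hne := (hπpos i).ne'
    field_simp
  have hperp : ∀ i, perpComp π (π ᵥ* Matrix.diagonal X) i = π i * (X i - S) := by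
    intro i
    have hinner' : piInner π (fun i => π i * X i) π = S := by rw [← hvm]; exact hinner
    simp only [perpComp, parComp, hvm, hinner']
    ring
  have hkey : (∑ i, (perpComp π (π ᵥ* Matrix.diagonal X) i) ^ 2 / π i)
      = ∑ i, π i * (X i - S) ^ 2 := by
    refine Finset.sum_congr rfl fun i _ => ?_
    rw [hperp i]
    have hne := (hπpos i).ne'
    field_simp
  set Q : ℝ := ∑ i, π i * X i ^ 2 with hQ
  have e1 : ∑ i, π i * (X i - S) ^ 2 = Q - S ^ 2 := by
    have h : ∀ i ∈ Finset.univ, π i * (X i - S) ^ 2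
        = π i * X i ^ 2 - 2 * S * (π i * X i) + S ^ 2 * π i := fun i _ => by ring
    rw [Finset.sum_congr rfl h, Finset.sum_add_distrib, Finset.sum_sub_distrib,
      ← Finset.mul_sum, ← Finset.mul_sum, ← hS, ← hQ, hπ.2]
    ring
  have e2 : ∑ i, π i * (X i - 1) ^ 2 = Q - 2 * S + 1 := by
    have h : ∀ i ∈ Finset.univ, π i * (X i - 1) ^ 2
        = π i * X i ^ 2 - 2 * (π i * X i) + π i := fun i _ => by ring
    rw [Finset.sum_congr rfl h, Finset.sum_add_distrib, Finset.sum_sub_distrib,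
      ← Finset.mul_sum, ← hS, ← hQ, hπ.2]
  have h1 : ∑ i, π i * (X i - S) ^ 2 ≤ ∑ i, π i * (X i - 1) ^ 2 := by
    rw [e1, e2]; nlinarith [sq_nonneg (S - 1)]
  have h2 : ∑ i, π i * (X i - 1) ^ 2 ≤ r ^ 2 * μ := by
    rw [← hμ, Finset.mul_sum]
    refine Finset.sum_le_sum fun i _ => ?_
    have hfi := hf i
    have hx0 : 0 ≤ r * f i := mul_nonneg hr0 hfi.1
    have hexp1 : X i ≤ 1 := by
      simp only [hX]
      exact Real.exp_le_one_iff.mpr (by linarith)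
    have hexp2 : 1 - r * f i ≤ X i := by
      have := Real.add_one_le_exp (-(r * f i))
      simp only [hX]; linarith
    have hsq : (X i - 1) ^ 2 ≤ (r * f i) ^ 2 := by nlinarith
    have hff : f i * f i ≤ f i := mul_le_of_le_one_left hfi.1 hfi.2
    have hsq2 : (r * f i) ^ 2 ≤ r ^ 2 * f i := by
      nlinarith [mul_le_mul_of_nonneg_left hff (sq_nonneg r)]
    have hπi := (hπpos i).le
    calc π i * (X i - 1) ^ 2 ≤ π i * (r ^ 2 * f i) := by nlinarith
      _ = r ^ 2 * (f i * π i) := by ring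
  have hbound : ∑ i, (perpComp π (π ᵥ* Matrix.diagonal X) i) ^ 2 / π i
      ≤ (Real.sqrt 2 * r * Real.sqrt μ) ^ 2 := by
    have hrhs : (Real.sqrt 2 * r * Real.sqrt μ) ^ 2 = 2 * r ^ 2 * μ := by
      rw [mul_pow, mul_pow, Real.sq_sqrt (by norm_num : (2:ℝ) ≥ 0), Real.sq_sqrt hμ0]
    rw [hkey, hrhs]
    nlinarith [mul_nonneg (mul_nonneg (sq_nonneg r) hμ0) (by norm_num : (0:ℝ) ≤ 1)]
  have hrhs0 : 0 ≤ Real.sqrt 2 * r * Real.sqrt μ :=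
    mul_nonneg (mul_nonneg (Real.sqrt_nonneg 2) hr0) (Real.sqrt_nonneg μ)
  calc piNorm π (perpComp π (π ᵥ* Matrix.diagonal X))
      ≤ Real.sqrt ((Real.sqrt 2 * r * Real.sqrt μ) ^ 2) := Real.sqrt_le_sqrt hbound
    _ = Real.sqrt 2 * r * Real.sqrt μ := Real.sqrt_sq hrhs0
end

section
/- Let π be a probability distribution with π_i > 0, f:[n]→[0,1] with ∑_i f(i)π_i = μ, and P diagonal with P_{jj} = e^{−r f(j)} for 0 ≤ r ≤ 1/2. Then for every vector y with ⟨y,π⟩_π = 0, ‖(yP)^∥‖_π ≤ r√μ · ‖y‖_π, and ‖(yP)^⊥‖_π ≤ ‖y‖_π. -/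
open Finset Matrix

theorem stmt_13 (n : ℕ) (π : Fin n → ℝ) (hπ : IsDist π) (hπpos : ∀ i, 0 < π i)
    (f : Fin n → ℝ) (hf : ∀ i, 0 ≤ f i ∧ f i ≤ 1)
    (μ : ℝ) (hμ : ∑ i, f i * π i = μ)
    (r : ℝ) (hr0 : 0 ≤ r) (hr : r ≤ 1 / 2)
    (P : Matrix (Fin n) (Fin n) ℝ)
    (hP : P = Matrix.diagonal fun j => Real.exp (-(r * f j)))
    (y : Fin n → ℝ) (hy : piInner π y π = 0) :
    piNorm π (parComp π (y ᵥ* P)) ≤ r * Real.sqrt μ * piNorm π y ∧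
    piNorm π (perpComp π (y ᵥ* P)) ≤ piNorm π y := by
  have hπne : ∀ i, π i ≠ 0 := fun i => (hπpos i).ne'
  set z : Fin n → ℝ := y ᵥ* P with hz
  have hzi : ∀ i, z i = y i * Real.exp (-(r * f i)) := by
    intro i; simp [hz, hP, Matrix.vecMul_diagonal]
  have hysum : ∑ i, y i = 0 := by
    have := hy
    simpa [piInner, mul_div_assoc, div_self (hπne _)] using this
  -- main inner product
  set c : ℝ := piInner π z π with hc
  have hcval : c = ∑ i, z i := by
    simp [hc, piInner, mul_div_assoc, div_self (hπne _)]
  set g : Fin n → ℝ := fun i => 1 - Real.exp (-(r * f i)) with hg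
  have hg0 : ∀ i, 0 ≤ g i := by
    intro i
    have : Real.exp (-(r * f i)) ≤ 1 := by
      rw [Real.exp_le_one_iff]
      exact neg_nonpos.mpr (mul_nonneg hr0 (hf i).1)
    simpa [hg] using this
  have hgle : ∀ i, g i ≤ r * f i := by
    intro i
    have := Real.add_one_le_exp (-(r * f i))
    simp [hg]; linarith
  have hcneg : c = -∑ i, y i * g i := by
    rw [hcval]
    have : ∀ i, z i = y i - y i * g i := by
      intro i; rw [hzi]; simp [hg]; ring
    simp only [this, Finset.sum_sub_distrib, hysum]
    ring
  have hμ0 : 0 ≤ μ := by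
    rw [← hμ]; exact Finset.sum_nonneg fun i _ => mul_nonneg (hf i).1 (hπpos i).le
  have hynorm0 : 0 ≤ ∑ i, (y i)^2 / π i :=
    Finset.sum_nonneg fun i _ => div_nonneg (sq_nonneg _) (hπpos i).le
  -- Cauchy–Schwarz bound on c²
  have hcs : c ^ 2 ≤ (∑ i, (y i)^2 / π i) * (r^2 * μ) := by
    have h1 : c ^ 2 = (∑ i, (y i / Real.sqrt (π i)) * (g i * Real.sqrt (π i))) ^ 2 := by
      rw [hcneg, neg_sq]
      congr 1
      refine Finset.sum_congr rfl fun i _ => ?_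
      have hs : Real.sqrt (π i) ≠ 0 := (Real.sqrt_pos.mpr (hπpos i)).ne'
      field_simp
    rw [h1]
    calc (∑ i, (y i / Real.sqrt (π i)) * (g i * Real.sqrt (π i))) ^ 2
        ≤ (∑ i, (y i / Real.sqrt (π i))^2) * ∑ i, (g i * Real.sqrt (π i))^2 :=
          Finset.sum_mul_sq_le_sq_mul_sq _ _ _
      _ ≤ (∑ i, (y i)^2 / π i) * (r^2 * μ) := by
          apply mul_le_mul ?_ ?_ (Finset.sum_nonneg fun i _ => sq_nonneg _) hynorm0
          · apply le_of_eq
            refine Finset.sum_congr rfl fun i _ => ?_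
            rw [div_pow, Real.sq_sqrt (hπpos i).le]
          · rw [← hμ, Finset.mul_sum]
            refine Finset.sum_le_sum fun i _ => ?_
            rw [mul_pow, Real.sq_sqrt (hπpos i).le]
            have h2 : g i ^ 2 ≤ (r * f i)^2 := by
              apply pow_le_pow_left₀ (hg0 i) (hgle i)
            have h3 : (r * f i)^2 ≤ r^2 * f i := by
              have h4 : 0 ≤ r^2 * f i * (1 - f i) :=
                mul_nonneg (mul_nonneg (sq_nonneg r) (hf i).1)
                  (by linarith [(hf i).2])
              nlinarith [h4]
            have := mul_le_mul_of_nonneg_right (h2.trans h3) (hπpos i).le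
            linarith [this]
  -- par norm equals |c|
  have hπsum : ∑ i, π i = 1 := hπ.2
  have hpar : piNorm π (parComp π z) = |c| := by
    unfold piNorm parComp
    have : ∀ i, (piInner π z π * π i)^2 / π i = c^2 * π i := by
      intro i; rw [← hc]; field_simp [hπne i]
    rw [Finset.sum_congr rfl fun i _ => this i, ← Finset.mul_sum, hπsum, mul_one,
      Real.sqrt_sq_eq_abs]
  refine ⟨?_, ?_⟩
  · rw [hpar]
    have hrhs : 0 ≤ r * Real.sqrt μ * piNorm π y := by unfold piNorm; positivity
    rw [← Real.sqrt_sq_eq_abs, ← Real.sqrt_sq hrhs]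
    apply Real.sqrt_le_sqrt
    calc c^2 ≤ (∑ i, (y i)^2 / π i) * (r^2 * μ) := hcs
      _ = (r * Real.sqrt μ * piNorm π y)^2 := by
          unfold piNorm
          rw [mul_pow, mul_pow, Real.sq_sqrt hμ0, Real.sq_sqrt hynorm0]
          ring
  · -- Pythagoras: ‖z⊥‖² = ‖z‖² − c² ≤ ‖z‖² ≤ ‖y‖²
    unfold piNorm
    apply Real.sqrt_le_sqrt
    have hperp : ∑ i, (perpComp π z i)^2 / π i = (∑ i, (z i)^2 / π i) - c^2 := by
      unfold perpComp parComp
      rw [← hc]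
      have : ∀ i, (z i - c * π i)^2 / π i = (z i)^2 / π i - 2 * c * z i + c^2 * π i := by
        intro i; field_simp [hπne i]; ring
      rw [Finset.sum_congr rfl fun i _ => this i]
      rw [Finset.sum_add_distrib, Finset.sum_sub_distrib, ← Finset.mul_sum,
        ← Finset.mul_sum, hπsum, ← hcval]
      ring
    rw [hperp]
    have hzle : ∑ i, (z i)^2 / π i ≤ ∑ i, (y i)^2 / π i := by
      refine Finset.sum_le_sum fun i _ => ?_
      have hnum : (z i)^2 ≤ (y i)^2 := by
        rw [hzi, mul_pow]
        have he1 : Real.exp (-(r * f i)) ≤ 1 := by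
          rw [Real.exp_le_one_iff]
          exact neg_nonpos.mpr (mul_nonneg hr0 (hf i).1)
        have := mul_le_mul_of_nonneg_left
          (pow_le_pow_left₀ (Real.exp_nonneg _) he1 2) (sq_nonneg (y i))
        simpa using this
      exact div_le_div_of_nonneg_right hnum (hπpos i).le
    nlinarith [sq_nonneg c]
end
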